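/- Let Q be a finite poset with n elements and L a linear extension of Q. Then rowmotion equals the composition of all toggles in the reverse order of L: Row = t_{L⁻¹(1)} ∘ t_{L⁻¹(2)} ∘ ⋯ ∘ t_{L⁻¹(n)} as maps J(Q) → J(Q) (so the toggle of the element with the largest label is applied first). -/

import Mathlib

/-- An order ideal (downward-closed subset) of a poset. -/
def IsIdeal {Q : Type*} [PartialOrder Q] (I : Set Q) : Prop :=
  ∀ ⦃a b : Q⦄, a ≤ b → b ∈ I → a ∈ I

/-- `J(Q)`: the order ideals of `Q`. -/
def Ideals (Q : Type*) [PartialOrder Q] : Type _ := {I : Set Q // IsIdeal I}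

open Classical in
/-- The toggle `t_x`: replace `I` by the symmetric difference `I ∆ {x}` if
that set is an order ideal, and do nothing otherwise. -/
noncomputable def toggle {Q : Type*} [PartialOrder Q] (x : Q) (I : Ideals Q) :
    Ideals Q :=
  if h : IsIdeal (symmDiff I.1 {x}) then ⟨symmDiff I.1 {x}, h⟩ else I

/-- Rowmotion: send the order ideal `I` to the order ideal generated by the
minimal elements of the complement of `I`. -/
def rowmotion {Q : Type*} [PartialOrder Q] (I : Ideals Q) : Ideals Q :=
  ⟨{y : Q | ∃ m : Q, (m ∉ I.1 ∧ ∀ z : Q, z ∉ I.1 → z ≤ m → z = m) ∧ y ≤ m},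
    fun _ _ hab hb => hb.imp fun _ h => ⟨h.1, hab.trans h.2⟩⟩

section aux
variable {Q : Type*} [PartialOrder Q]

lemma mem_symmDiff_single {I : Set Q} {x z : Q} :
    z ∈ symmDiff I {x} ↔ (z ∈ I ∧ z ≠ x) ∨ (z = x ∧ z ∉ I) := by
  rw [Set.mem_symmDiff]; simp

lemma toggle_mem_ne (x : Q) (J : Ideals Q) {z : Q} (hz : z ≠ x) :
    z ∈ (toggle x J).1 ↔ z ∈ J.1 := by
  by_cases h : IsIdeal (symmDiff J.1 {x})
  · rw [show toggle x J = ⟨symmDiff J.1 {x}, h⟩ from dif_pos h]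
    simp [mem_symmDiff_single, hz]
  · rw [show toggle x J = J from dif_neg h]

lemma mem_toggle_of_mem (J : Ideals Q) (x : Q) (hx : x ∈ J.1) :
    x ∈ (toggle x J).1 ↔ ∃ y, x < y ∧ y ∈ J.1 := by
  by_cases h : IsIdeal (symmDiff J.1 {x})
  · rw [show toggle x J = ⟨symmDiff J.1 {x}, h⟩ from dif_pos h]
    constructor
    · intro hmem
      rcases mem_symmDiff_single.1 hmem with ⟨_, hne⟩ | ⟨_, hnot⟩
      · exact absurd rfl hne
      · exact absurd hx hnot
    · rintro ⟨y, hxy, hy⟩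
      exact h hxy.le (mem_symmDiff_single.2 (Or.inl ⟨hy, hxy.ne'⟩))
  · rw [show toggle x J = J from dif_neg h]
    constructor
    · intro _
      unfold IsIdeal at h
      push_neg at h
      obtain ⟨a, b, hab, hb, ha⟩ := h
      rcases mem_symmDiff_single.1 hb with ⟨hbJ, hbx⟩ | ⟨hbx, hbJ⟩
      · have haJ : a ∈ J.1 := J.2 hab hbJ
        have hax : a = x := by
          by_contra hax
          exact ha (mem_symmDiff_single.2 (Or.inl ⟨haJ, hax⟩))
        subst hax
        exact ⟨b, hab.lt_of_ne (Ne.symm hbx), hbJ⟩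
      · exact absurd hx (hbx ▸ hbJ)
    · intro _; exact hx

lemma mem_toggle_of_not_mem (J : Ideals Q) (x : Q) (hx : x ∉ J.1) :
    x ∈ (toggle x J).1 ↔ ∀ z, z < x → z ∈ J.1 := by
  by_cases h : IsIdeal (symmDiff J.1 {x})
  · rw [show toggle x J = ⟨symmDiff J.1 {x}, h⟩ from dif_pos h]
    constructor
    · intro _ z hz
      have hzm : z ∈ symmDiff J.1 {x} :=
        h hz.le (mem_symmDiff_single.2 (Or.inr ⟨rfl, hx⟩))
      rcases mem_symmDiff_single.1 hzm with ⟨hzJ, _⟩ | ⟨hzx, _⟩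
      · exact hzJ
      · exact absurd hzx hz.ne
    · intro _
      exact mem_symmDiff_single.2 (Or.inr ⟨rfl, hx⟩)
  · rw [show toggle x J = J from dif_neg h]
    constructor
    · intro hmem; exact absurd hmem hx
    · intro hall
      exfalso
      unfold IsIdeal at h
      push_neg at h
      obtain ⟨a, b, hab, hb, ha⟩ := h
      rcases mem_symmDiff_single.1 hb with ⟨hbJ, hbx⟩ | ⟨hbx, _⟩
      · have haJ : a ∈ J.1 := J.2 hab hbJ
        have hax : a = x := by
          by_contra hax
          exact ha (mem_symmDiff_single.2 (Or.inl ⟨haJ, hax⟩))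
        exact hx (hax ▸ haJ)
      · subst hbx
        have hax : a ≠ b := by
          rintro rfl
          exact ha (mem_symmDiff_single.2 (Or.inr ⟨rfl, hx⟩))
        have haJ : a ∈ J.1 := hall a (hab.lt_of_ne hax)
        exact ha (mem_symmDiff_single.2 (Or.inl ⟨haJ, hax⟩))

lemma mem_row_of_mem (I : Ideals Q) (x : Q) (hx : x ∈ I.1) :
    x ∈ (rowmotion I).1 ↔ ∃ y, x < y ∧ y ∈ (rowmotion I).1 := by
  constructor
  · rintro ⟨m, ⟨hm, hmin⟩, hxm⟩
    refine ⟨m, hxm.lt_of_ne ?_, ⟨m, ⟨hm, hmin⟩, le_refl m⟩⟩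
    rintro rfl; exact hm hx
  · rintro ⟨y, hxy, m, hm, hym⟩
    exact ⟨m, hm, hxy.le.trans hym⟩

lemma mem_row_of_not_mem (I : Ideals Q) (x : Q) (hx : x ∉ I.1) :
    x ∈ (rowmotion I).1 ↔ ∀ z, z < x → z ∈ I.1 := by
  constructor
  · rintro ⟨m, ⟨hm, hmin⟩, hxm⟩ z hz
    have hxm' : x = m := hmin x hx hxm
    subst hxm'
    by_contra hzI
    exact absurd (hmin z hzI hz.le) hz.ne
  · intro hall
    refine ⟨x, ⟨hx, fun z hz hzx => ?_⟩, le_refl x⟩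
    by_contra hne
    exact hz (hall z (hzx.lt_of_ne hne))

end aux

lemma key_toggle {Q : Type*} [PartialOrder Q] {n : ℕ} (L : Q ≃ Fin n)
    (hL : ∀ x y : Q, x < y → L x < L y) (I : Ideals Q) :
    ∀ j (hjle : j ≤ n) (x : Q),
      (x ∈ (((List.ofFn fun i : Fin j =>
          toggle (L.symm ⟨n - j + (i : ℕ), by have := i.isLt; omega⟩)).foldr
        (fun t g => t ∘ g) id) I).1 ↔
        if (L x : ℕ) < n - j then x ∈ I.1 else x ∈ (rowmotion I).1) := by
  intro j
  induction j with
  | zero =>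
    intro _ x
    simp only [List.ofFn_zero, List.foldr_nil, id]
    rw [if_pos (by simpa using (L x).isLt)]
  | succ j ih =>
    intro hj x
    have hjn : j < n := hj
    have hlist : (List.ofFn fun i : Fin (j+1) =>
        toggle (L.symm ⟨n - (j+1) + (i : ℕ), by have := i.isLt; omega⟩))
        = toggle (L.symm ⟨n - j - 1, by omega⟩) ::
          (List.ofFn fun i : Fin j =>
            toggle (L.symm ⟨n - j + (i : ℕ), by have := i.isLt; omega⟩)) := by
      rw [List.ofFn_succ]
      congr 1
      exact congrArg List.ofFn (funext fun i =>
        congrArg (fun v : Fin n => toggle (L.symm v))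
          (Fin.ext (by simp only [Fin.val_succ]; omega)))
    rw [hlist]
    simp only [List.foldr_cons, Function.comp_apply]
    set x₀ : Q := L.symm ⟨n - j - 1, by omega⟩ with hx₀
    set prev : Ideals Q :=
      ((List.ofFn fun i : Fin j =>
        toggle (L.symm ⟨n - j + (i : ℕ), by have := i.isLt; omega⟩)).foldr
        (fun t g => t ∘ g) id) I with hprevdef
    have IH : ∀ z : Q, z ∈ prev.1 ↔
        if (L z : ℕ) < n - j then z ∈ I.1 else z ∈ (rowmotion I).1 :=
      ih (le_of_lt hjn)
    have hLx0 : (L x₀ : ℕ) = n - j - 1 := by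
      rw [hx₀, L.apply_symm_apply]
    by_cases hxx : x = x₀
    · subst hxx
      rw [if_neg (by omega)]
      by_cases hI : x₀ ∈ I.1
      · have hprev : x₀ ∈ prev.1 := (IH x₀).2 (by rw [if_pos (by omega)]; exact hI)
        rw [mem_toggle_of_mem prev x₀ hprev, mem_row_of_mem I x₀ hI]
        constructor
        · rintro ⟨y, hxy, hy⟩
          have hLy : (L x₀ : ℕ) < (L y : ℕ) := hL _ _ hxy
          refine ⟨y, hxy, ?_⟩
          have := (IH y).1 hy
          rwa [if_neg (by omega)] at this
        · rintro ⟨y, hxy, hy⟩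
          have hLy : (L x₀ : ℕ) < (L y : ℕ) := hL _ _ hxy
          refine ⟨y, hxy, (IH y).2 ?_⟩
          rw [if_neg (by omega)]
          exact hy
      · have hprev : x₀ ∉ prev.1 := fun h => hI (by
          have := (IH x₀).1 h
          rwa [if_pos (by omega)] at this)
        rw [mem_toggle_of_not_mem prev x₀ hprev, mem_row_of_not_mem I x₀ hI]
        constructor
        · intro hall z hz
          have hLz : (L z : ℕ) < (L x₀ : ℕ) := hL _ _ hz
          have := (IH z).1 (hall z hz)
          rwa [if_pos (by omega)] at this
        · intro hall z hz
          have hLz : (L z : ℕ) < (L x₀ : ℕ) := hL _ _ hz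
          refine (IH z).2 ?_
          rw [if_pos (by omega)]
          exact hall z hz
    · rw [toggle_mem_ne x₀ prev hxx, IH x]
      have hne : (L x : ℕ) ≠ n - j - 1 := by
        intro e
        exact hxx (L.injective (by rw [← hLx0] at e; exact Fin.ext e))
      by_cases hc : (L x : ℕ) < n - (j + 1)
      · rw [if_pos (by omega), if_pos hc]
      · rw [if_neg (by omega), if_neg hc]

/-- Rowmotion equals the composition of all the toggles in the reverse order
of a linear extension `L` (the toggle at the element with the largest label
being applied first). -/
theorem stmt14 {Q : Type*} [Fintype Q] [PartialOrder Q] (n : ℕ)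
    (L : Q ≃ Fin n) (hL : ∀ x y : Q, x < y → L x < L y) :
    rowmotion =
      (List.ofFn fun i : Fin n => toggle (L.symm i)).foldr (fun t g => t ∘ g) id := by
  funext I
  apply Subtype.ext
  ext x
  have h := key_toggle L hL I n le_rfl x
  have hlist : (List.ofFn fun i : Fin n =>
      toggle (L.symm ⟨n - n + (i : ℕ), by have := i.isLt; omega⟩))
      = List.ofFn fun i : Fin n => toggle (L.symm i) :=
    congrArg List.ofFn (funext fun i =>
      congrArg (fun v : Fin n => toggle (L.symm v)) (Fin.ext (by simp)))
  rw [hlist, if_neg (by omega)] at h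
  exact h.symm
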